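/- Suppose q is odd and there exists an MDS [n, 3] code over GF(q). Then n ≤ q + 1. -/

import Mathlib

open Finset

private lemma inj3' {α : Type*} {x y z : α} (hxy : x ≠ y) (hxz : x ≠ z) (hyz : y ≠ z) :
    Function.Injective ![x, y, z] := by
  intro a b hab
  fin_cases a <;> fin_cases b <;> simp_all

private lemma prod_erase_zero' (F : Type*) [Field F] [Fintype F] [DecidableEq F] :
    ∏ x ∈ Finset.univ.erase (0 : F), x = -1 := by
  have h := FiniteField.prod_univ_units_id_eq_neg_one (K := F)
  have h2 : ∏ u : Fˣ, (u : F) = -1 := by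
    calc ∏ u : Fˣ, (u : F) = ((∏ u : Fˣ, u : Fˣ) : F) := by
          exact (map_prod (Units.coeHom F) _ _).symm
      _ = -1 := by rw [h]; simp
  rw [← h2]
  refine Finset.prod_nbij' (fun x => if hx : x = 0 then 1 else Units.mk0 x hx)
    (fun u => (u : F)) ?_ ?_ ?_ ?_ ?_
  · intro a _; exact mem_univ _
  · intro u _; exact mem_erase.2 ⟨u.ne_zero, mem_univ _⟩
  · intro a ha; rcases mem_erase.1 ha with ⟨h0, -⟩; simp [h0]
  · intro u _; simp [u.ne_zero]
  · intro a ha; rcases mem_erase.1 ha with ⟨h0, -⟩; simp [h0]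

private lemma card_big' {q : ℕ} (hq : 1 ≤ q) :
    (Finset.univ.filter (fun j : Fin (q+2) => 3 ≤ (j : ℕ))).card = q - 1 := by
  have h3 : (3 : ℕ) ≤ q + 2 := by omega
  have himg : Finset.univ.filter (fun j : Fin (q+2) => ¬ 3 ≤ (j : ℕ))
      = Finset.univ.image (Fin.castLE h3) := by
    ext j
    simp only [mem_filter, mem_univ, true_and, mem_image, not_le]
    constructor
    · intro hj; exact ⟨⟨(j : ℕ), hj⟩, by ext; simp⟩
    · rintro ⟨k, rfl⟩; simpa using k.isLt
  have hcard2 : (Finset.univ.filter (fun j : Fin (q+2) => ¬ 3 ≤ (j : ℕ))).card = 3 := by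
    rw [himg, Finset.card_image_of_injective _ (Fin.castLE_injective h3)]
    simp
  have := Finset.card_filter_add_card_filter_not
    (s := (Finset.univ : Finset (Fin (q+2)))) (p := fun j : Fin (q+2) => 3 ≤ (j : ℕ))
  simp only [Finset.card_univ, Fintype.card_fin] at this
  omega

private lemma entry_ne_zero' {F : Type*} [Field F] {q : ℕ}
    (H : Matrix (Fin 3) (Fin (q+2)) F)
    (hdet : ∀ c : Fin 3 → Fin (q+2), Function.Injective c → (H.submatrix id c).det ≠ 0)
    (e : Fin 3 → Fin (q+2)) (he : ∀ k : Fin 3, ((e k : ℕ)) = (k : ℕ))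
    (hid : ∀ i k : Fin 3, H i (e k) = if i = k then 1 else 0)
    (r : Fin 3) (j : Fin (q+2)) (hj : 3 ≤ (j : ℕ)) : H r j ≠ 0 := by
  have hne : ∀ k : Fin 3, j ≠ e k := by
    intro k hk
    rw [← Fin.val_eq_val, he k] at hk
    omega
  have hee : ∀ k l : Fin 3, k ≠ l → e k ≠ e l := by
    intro k l hkl hc
    apply hkl
    rw [← Fin.val_eq_val, he, he] at hc
    exact Fin.ext hc
  fin_cases r
  · intro h0
    apply hdet ![j, e 1, e 2] (inj3' (hne 1) (hne 2) (hee 1 2 (by decide)))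
    rw [Matrix.det_fin_three]
    simp [hid]
    simpa using h0
  · intro h0
    apply hdet ![j, e 0, e 2] (inj3' (hne 0) (hne 2) (hee 0 2 (by decide)))
    rw [Matrix.det_fin_three]
    simp [hid]
    simpa using h0
  · intro h0
    apply hdet ![j, e 0, e 1] (inj3' (hne 0) (hne 1) (hee 0 1 (by decide)))
    rw [Matrix.det_fin_three]
    simp [hid]
    simpa using h0

private lemma prod_ratio_aux' {F : Type*} [Field F] [Fintype F] {q : ℕ}
    (hF : Fintype.card F = q) {m : ℕ} (f : Fin m → F) (S : Finset (Fin m))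
    (hcard : S.card = q - 1) (hq : 1 ≤ q)
    (hne : ∀ j ∈ S, f j ≠ 0)
    (hinj : ∀ j ∈ S, ∀ k ∈ S, f j = f k → j = k) :
    ∏ j ∈ S, f j = -1 := by
  classical
  have hT : S.image f = Finset.univ.erase 0 := by
    apply Finset.eq_of_subset_of_card_le
    · intro x hx
      rcases mem_image.1 hx with ⟨j, hj, rfl⟩
      exact mem_erase.2 ⟨hne j hj, mem_univ _⟩
    · rw [Finset.card_image_of_injOn hinj, hcard,
        card_erase_of_mem (mem_univ _), card_univ, hF]
  calc ∏ j ∈ S, f j = ∏ x ∈ S.image f, x := (Finset.prod_image (g := f) (f := fun x : F => x) hinj).symm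
    _ = -1 := by rw [hT, prod_erase_zero']

theorem stmt15 {F : Type*} [Field F] [Fintype F] {q n : ℕ} (hF : Fintype.card F = q)
    (hq : Odd q) (G : Matrix (Fin 3) (Fin n) F)
    (hG : ∀ c : Fin 3 → Fin n, Function.Injective c →
      Matrix.det (G.submatrix id c) ≠ 0) :
    n ≤ q + 1 := by
  classical
  by_contra hn
  push_neg at hn
  have hq1 : 1 ≤ q := hq.pos
  have hle : q + 2 ≤ n := hn
  set cst : Fin (q+2) → Fin n := Fin.castLE hle with hcst
  have hcstinj : Function.Injective cst := Fin.castLE_injective hle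
  set G' := G.submatrix id cst with hG'def
  have hdet' : ∀ c : Fin 3 → Fin (q+2), Function.Injective c →
      (G'.submatrix id c).det ≠ 0 := by
    intro c hc
    have heq : G'.submatrix id c = G.submatrix id (cst ∘ c) := by
      ext i k; rfl
    rw [heq]
    exact hG _ (hcstinj.comp hc)
  set e : Fin 3 → Fin (q+2) := fun k => ⟨(k : ℕ), by omega⟩ with hedef
  have he : ∀ k : Fin 3, ((e k : ℕ)) = (k : ℕ) := fun k => rfl
  have heinj : Function.Injective e := by
    intro a b hab
    have := congrArg Fin.val hab
    exact Fin.ext this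
  set M := G'.submatrix id e with hMdef
  have hMdet : M.det ≠ 0 := hdet' e heinj
  have hMunit : IsUnit M.det := isUnit_iff_ne_zero.2 hMdet
  set H := M⁻¹ * G' with hHdef
  have hdetH : ∀ c : Fin 3 → Fin (q+2), Function.Injective c →
      (H.submatrix id c).det ≠ 0 := by
    intro c hc
    have hsub : (M⁻¹ * G').submatrix id c = M⁻¹ * (G'.submatrix id c) := by
      have := Matrix.submatrix_mul M⁻¹ G' id id c Function.bijective_id
      simpa [Matrix.submatrix_id_id] using this
    rw [hHdef, hsub, Matrix.det_mul]
    apply mul_ne_zero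
    · rw [Matrix.det_nonsing_inv, Ring.inverse_eq_inv']
      exact inv_ne_zero hMdet
    · exact hdet' c hc
  have hid : ∀ i k : Fin 3, H i (e k) = if i = k then 1 else 0 := by
    intro i k
    have h1 : H i (e k) = (M⁻¹ * M) i k := by
      rw [hHdef, Matrix.mul_apply, Matrix.mul_apply]
      rfl
    rw [h1, Matrix.nonsing_inv_mul M hMunit, Matrix.one_apply]
  set S := Finset.univ.filter (fun j : Fin (q+2) => 3 ≤ (j : ℕ)) with hSdef
  have hScard : S.card = q - 1 := card_big' hq1
  have hnz : ∀ r : Fin 3, ∀ j ∈ S, H r j ≠ 0 := by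
    intro r j hj
    exact entry_ne_zero' H hdetH e he hid r j ((mem_filter.1 hj).2)
  have hnej : ∀ j : Fin (q+2), 3 ≤ (j : ℕ) → ∀ k : Fin 3, j ≠ e k := by
    intro j hj k hk
    have := congrArg Fin.val hk
    rw [he] at this
    omega
  -- three injectivity facts
  have hinj1 : ∀ j ∈ S, ∀ k ∈ S, H 1 j / H 0 j = H 1 k / H 0 k → j = k := by
    intro j hj k hk hfeq
    by_contra hjk
    have hj3 := (mem_filter.1 hj).2
    have hk3 := (mem_filter.1 hk).2
    have hcross : H 1 j * H 0 k = H 1 k * H 0 j :=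
      (div_eq_div_iff (hnz 0 j hj) (hnz 0 k hk)).1 hfeq
    apply hdetH ![j, k, e 2] (inj3' hjk (hnej j hj3 2) (hnej k hk3 2))
    rw [Matrix.det_fin_three]
    simp [hid]
    linear_combination -hcross
  have hinj2 : ∀ j ∈ S, ∀ k ∈ S, H 2 j / H 0 j = H 2 k / H 0 k → j = k := by
    intro j hj k hk hfeq
    by_contra hjk
    have hj3 := (mem_filter.1 hj).2
    have hk3 := (mem_filter.1 hk).2
    have hcross : H 2 j * H 0 k = H 2 k * H 0 j :=
      (div_eq_div_iff (hnz 0 j hj) (hnz 0 k hk)).1 hfeq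
    apply hdetH ![j, k, e 1] (inj3' hjk (hnej j hj3 1) (hnej k hk3 1))
    rw [Matrix.det_fin_three]
    simp [hid]
    linear_combination hcross
  have hinj3 : ∀ j ∈ S, ∀ k ∈ S, H 2 j / H 1 j = H 2 k / H 1 k → j = k := by
    intro j hj k hk hfeq
    by_contra hjk
    have hj3 := (mem_filter.1 hj).2
    have hk3 := (mem_filter.1 hk).2
    have hcross : H 2 j * H 1 k = H 2 k * H 1 j :=
      (div_eq_div_iff (hnz 1 j hj) (hnz 1 k hk)).1 hfeq
    apply hdetH ![j, k, e 0] (inj3' hjk (hnej j hj3 0) (hnej k hk3 0))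
    rw [Matrix.det_fin_three]
    simp [hid]
    linear_combination -hcross
  have P1 : ∏ j ∈ S, H 1 j / H 0 j = -1 :=
    prod_ratio_aux' hF _ S hScard hq1
      (fun j hj => div_ne_zero (hnz 1 j hj) (hnz 0 j hj)) hinj1
  have P2 : ∏ j ∈ S, H 2 j / H 0 j = -1 :=
    prod_ratio_aux' hF _ S hScard hq1
      (fun j hj => div_ne_zero (hnz 2 j hj) (hnz 0 j hj)) hinj2
  have P3 : ∏ j ∈ S, H 2 j / H 1 j = -1 :=
    prod_ratio_aux' hF _ S hScard hq1
      (fun j hj => div_ne_zero (hnz 2 j hj) (hnz 1 j hj)) hinj3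
  have hsplit : ∏ j ∈ S, H 2 j / H 0 j
      = (∏ j ∈ S, H 1 j / H 0 j) * (∏ j ∈ S, H 2 j / H 1 j) := by
    rw [← Finset.prod_mul_distrib]
    apply Finset.prod_congr rfl
    intro j hj
    have h0 := hnz 0 j hj
    have h1 := hnz 1 j hj
    field_simp
  rw [P1, P2, P3] at hsplit
  have hneg : (-1 : F) = 1 := by
    rw [hsplit]; ring
  have h2 : (2 : F) = 0 := by linear_combination -hneg
  have hp2 : ringChar F = 2 :=
    CharP.ringChar_of_prime_eq_zero Nat.prime_two (by exact_mod_cast h2)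
  haveI : CharP F 2 := hp2 ▸ ringChar.charP F
  obtain ⟨k, -, hcard⟩ := FiniteField.card F 2
  rw [hF] at hcard
  have heven : Even q := by
    rw [hcard]
    exact (Nat.even_pow).2 ⟨even_two, k.pos.ne'⟩
  exact (Nat.not_even_iff_odd.2 hq) heven
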